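/- Every BCCS term t with a τ-transition (having a summand τt') can be proved equal, from A1–4 + WIF1 + WIF2, to a term of the form Σ_{i∈I} τt_i where I is nonempty and each t_i is a BCCSP term (containing no τ prefix). -/

import Mathlib

/-- BCCS terms over concrete actions `A` (with `none` playing the role of the
hidden action τ) and variables `V`. -/
inductive Tm (A V : Type) : Type
  | nil : Tm A V
  | var : V → Tm A V
  | plus : Tm A V → Tm A V → Tm A V
  | pre : Option A → Tm A V → Tm A V

namespace Tm

variable {A V : Type}

/-- The operational semantics of BCCS. -/
inductive Step : Tm A V → Option A → Tm A V → Prop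
  | pre (α : Option A) (t : Tm A V) : Step (.pre α t) α t
  | plusL {t : Tm A V} {α : Option A} {t' : Tm A V} (u : Tm A V) :
      Step t α t' → Step (.plus t u) α t'
  | plusR (t : Tm A V) {u : Tm A V} {α : Option A} {u' : Tm A V} :
      Step u α u' → Step (.plus t u) α u'

/-- `⇒` : the reflexive-transitive closure of τ-steps. -/
def WTau : Tm A V → Tm A V → Prop := Relation.ReflTransGen (fun t u => Step t none u)

/-- Strong (concrete) traces leading to a state. -/
inductive TraceTo : Tm A V → List A → Tm A V → Prop
  | refl (t : Tm A V) : TraceTo t [] t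
  | act {t : Tm A V} {a : A} {t' : Tm A V} {w : List A} {u : Tm A V} :
      Step t (some a) t' → TraceTo t' w u → TraceTo t (a :: w) u

/-- Weak traces leading to a state (τ-steps are skipped). -/
inductive WTraceTo : Tm A V → List A → Tm A V → Prop
  | refl (t : Tm A V) : WTraceTo t [] t
  | tau {t t' : Tm A V} {w : List A} {u : Tm A V} :
      Step t none t' → WTraceTo t' w u → WTraceTo t w u
  | act {t : Tm A V} {a : A} {t' : Tm A V} {w : List A} {u : Tm A V} :
      Step t (some a) t' → WTraceTo t' w u → WTraceTo t (a :: w) u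

/-- The set of (strong) traces of a term. -/
def T (t : Tm A V) : Set (List A) := {w | ∃ t', TraceTo t w t'}

/-- The set of weak traces of a term. -/
def WT (t : Tm A V) : Set (List A) := {w | ∃ t', WTraceTo t w t'}

/-- `(w, B)` is an impossible future of `t`. -/
def ImpFut (t : Tm A V) (w : List A) (B : Set (List A)) : Prop :=
  ∃ t', TraceTo t w t' ∧ ∀ s ∈ T t', s ∉ B

/-- `(w, B)` is a weak impossible future of `t`. -/
def WImpFut (t : Tm A V) (w : List A) (B : Set (List A)) : Prop :=
  ∃ t', WTraceTo t w t' ∧ ∀ s ∈ WT t', s ∉ B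

/-- The (concrete) impossible futures preorder. -/
def IFle (p q : Tm A V) : Prop := ∀ w B, ImpFut p w B → ImpFut q w B

/-- (Concrete) impossible futures equivalence. -/
def IFeq (p q : Tm A V) : Prop := IFle p q ∧ IFle q p

/-- The weak impossible futures preorder. -/
def WIFle (p q : Tm A V) : Prop :=
  (∀ w B, WImpFut p w B → WImpFut q w B) ∧ (WT p = WT q) ∧
  ((∃ p', Step p none p') → ∃ q', Step q none q')

/-- Weak impossible futures equivalence. -/
def WIFeq (p q : Tm A V) : Prop := WIFle p q ∧ WIFle q p

/-- The variables occurring in a term. -/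
def vars : Tm A V → Set V
  | nil => ∅
  | var x => {x}
  | plus t u => vars t ∪ vars u
  | pre _ t => vars t

/-- A term is closed if it contains no variables. -/
def Closed (t : Tm A V) : Prop := vars t = ∅

/-- Substitution. -/
def subst (σ : V → Tm A V) : Tm A V → Tm A V
  | nil => nil
  | var x => σ x
  | plus t u => plus (subst σ t) (subst σ u)
  | pre α t => pre α (subst σ t)

/-- A closed substitution. -/
def ClosedSub (σ : V → Tm A V) : Prop := ∀ x, Closed (σ x)

/-- A BCCSP term: one containing no occurrence of the τ prefix. -/
def NoTau : Tm A V → Prop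
  | nil => True
  | var _ => True
  | plus t u => NoTau t ∧ NoTau u
  | pre none _ => False
  | pre (some _) t => NoTau t

/-- The variables occurring initially (outside all prefixes). -/
def initVars : Tm A V → Set V
  | nil => ∅
  | var x => {x}
  | plus t u => initVars t ∪ initVars u
  | pre _ _ => ∅

/-- The variables having a non-initial occurrence (under some prefix). -/
def deepVars : Tm A V → Set V
  | nil => ∅
  | var _ => ∅
  | plus t u => deepVars t ∪ deepVars u
  | pre _ t => vars t

/-- A term is safe if no variable occurs both initially and non-initially. -/
def Safe (t : Tm A V) : Prop := initVars t ∩ deepVars t = ∅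

/-- `init-τ` : rename all initial prefixes into τ. -/
def initTau : Tm A V → Tm A V
  | nil => nil
  | var x => var x
  | plus t u => plus (initTau t) (initTau u)
  | pre _ t => pre none t

/-- The weak depth of a term (τ-prefixes are not counted). -/
def wdepth : Tm A V → ℕ
  | nil => 0
  | var _ => 0
  | plus t u => max (wdepth t) (wdepth u)
  | pre none t => wdepth t
  | pre (some _) t => wdepth t + 1

/-- `n`-fold prefixing with the action `a`. -/
def npre (a : A) : ℕ → Tm A V → Tm A V
  | 0, t => t
  | n + 1, t => pre (some a) (npre a n t)

/-- Finite sums of terms. -/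
def listSum : List (Tm A V) → Tm A V
  | [] => nil
  | t :: l => plus t (listSum l)

/-- Weak traces ending in a variable: `(w, x) ∈ WTV t` iff `t` can weakly perform
`w` and reach a term in which `x` occurs initially. -/
def WTV (t : Tm A V) : Set (List A × V) :=
  {wx | ∃ t', WTraceTo t wx.1 t' ∧ wx.2 ∈ initVars t'}

/-- The axioms A1-4 + WIF1 + WIF2 (as schemas, i.e. closed under instantiation). -/
inductive AX : Tm A V → Tm A V → Prop
  | A1 (t u : Tm A V) : AX (.plus t u) (.plus u t)
  | A2 (t u v : Tm A V) : AX (.plus (.plus t u) v) (.plus t (.plus u v))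
  | A3 (t : Tm A V) : AX (.plus t t) t
  | A4 (t : Tm A V) : AX (.plus t .nil) t
  | WIF1 (α : Option A) (t u : Tm A V) :
      AX (.pre α (.plus (.pre none t) (.pre none u))) (.plus (.pre α t) (.pre α u))
  | WIF2 (t u : Tm A V) :
      AX (.plus (.pre none t) u) (.plus (.pre none t) (.pre none (.plus t u)))

/-- Equational derivability from an axiomatization `E`. -/
inductive Deriv (E : Tm A V → Tm A V → Prop) : Tm A V → Tm A V → Prop
  | ax {t u : Tm A V} : E t u → Deriv E t u
  | inst {t u : Tm A V} (σ : V → Tm A V) : E t u → Deriv E (subst σ t) (subst σ u)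
  | refl (t : Tm A V) : Deriv E t t
  | symm {t u : Tm A V} : Deriv E t u → Deriv E u t
  | trans {t u v : Tm A V} : Deriv E t u → Deriv E u v → Deriv E t v
  | pre (α : Option A) {t u : Tm A V} : Deriv E t u → Deriv E (.pre α t) (.pre α u)
  | plus {t u t' u' : Tm A V} :
      Deriv E t t' → Deriv E u u' → Deriv E (.plus t u) (.plus t' u')

/-- Inequational derivability from an axiomatization `E` (no symmetry). -/
inductive IDeriv (E : Tm A V → Tm A V → Prop) : Tm A V → Tm A V → Prop
  | ax {t u : Tm A V} : E t u → IDeriv E t u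
  | inst {t u : Tm A V} (σ : V → Tm A V) : E t u → IDeriv E (subst σ t) (subst σ u)
  | refl (t : Tm A V) : IDeriv E t t
  | trans {t u v : Tm A V} : IDeriv E t u → IDeriv E u v → IDeriv E t v
  | pre (α : Option A) {t u : Tm A V} : IDeriv E t u → IDeriv E (.pre α t) (.pre α u)
  | plus {t u t' u' : Tm A V} :
      IDeriv E t t' → IDeriv E u u' → IDeriv E (.plus t u) (.plus t' u')

end Tm

namespace Tm

variable {A V : Type}

private lemma listSum_perm {l1 l2 : List (Tm A V)} (h : l1.Perm l2) :
    Deriv AX (listSum l1) (listSum l2) := by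
  induction h with
  | nil => exact .refl _
  | cons x _ ih => exact .plus (.refl x) ih
  | swap x y l =>
      exact .trans (.symm (.ax (.A2 y x (listSum l))))
        (.trans (.plus (.ax (.A1 y x)) (.refl _)) (.ax (.A2 x y (listSum l))))
  | trans _ _ ih1 ih2 => exact .trans ih1 ih2

private lemma listSum_append : ∀ l1 l2 : List (Tm A V),
    Deriv AX (plus (listSum l1) (listSum l2)) (listSum (l1 ++ l2))
  | [], l2 => .trans (.ax (.A1 _ _)) (.ax (.A4 _))
  | a :: l1, l2 => .trans (.ax (.A2 a _ _)) (.plus (.refl a) (listSum_append l1 l2))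

private lemma noTau_listSum {l : List (Tm A V)} (h : ∀ s ∈ l, NoTau s) :
    NoTau (listSum l) := by
  induction l with
  | nil => trivial
  | cons a l ih =>
      exact ⟨h a List.mem_cons_self, ih fun s hs => h s (List.mem_cons_of_mem _ hs)⟩

/-- Derived law: τ(τx + y) ≈ τx + y. -/
private lemma lawL2 (x y : Tm A V) :
    Deriv AX (pre none (plus (pre none x) y)) (plus (pre none x) y) :=
  .trans (.pre none (.ax (.WIF2 x y)))
    (.trans (.ax (.WIF1 none x (plus x y))) (.symm (.ax (.WIF2 x y))))

/-- Derived law: α(τx + y) ≈ αx + α(x + y). -/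
private lemma lawL4 (α : Option A) (x y : Tm A V) :
    Deriv AX (pre α (plus (pre none x) y)) (plus (pre α x) (pre α (plus x y))) :=
  .trans (.pre α (.ax (.WIF2 x y))) (.ax (.WIF1 α x (plus x y)))

private lemma lemG (α : Option A) : ∀ (lt lo : List (Tm A V)),
    (∀ s ∈ lt, NoTau s) → (∀ s ∈ lo, NoTau s) →
    ∃ l : List (Tm A V), l ≠ [] ∧ (∀ s ∈ l, NoTau s) ∧
      Deriv AX (pre α (listSum (lt.map (pre none) ++ lo))) (listSum (l.map (pre α)))
  | [], lo, _, hlo => by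
      refine ⟨[listSum lo], by simp, ?_, .symm (.ax (.A4 _))⟩
      intro s hs
      rw [List.mem_singleton] at hs
      subst hs
      exact noTau_listSum hlo
  | x :: rest, lo, hlt, hlo => by
      obtain ⟨l, hne, hN, hd⟩ := lemG α rest (x :: lo)
        (fun s hs => hlt s (List.mem_cons_of_mem _ hs))
        (fun s hs => by
          rcases List.mem_cons.mp hs with h | hs
          · rw [h]; exact hlt x List.mem_cons_self
          · exact hlo _ hs)
      refine ⟨x :: l, by simp, ?_, ?_⟩
      · intro s hs
        rcases List.mem_cons.mp hs with h | hs
        · rw [h]; exact hlt x List.mem_cons_self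
        · exact hN _ hs
      · refine .trans (lawL4 α x (listSum (rest.map (pre none) ++ lo))) ?_
        exact .plus (.refl _)
          (.trans (.pre α (listSum_perm List.perm_middle.symm)) hd)

private lemma lemH (u : Tm A V) : ∀ (lo ut : List (Tm A V)),
    NoTau u → (∀ s ∈ ut, NoTau s) → (∀ s ∈ lo, NoTau s) →
    ∃ l : List (Tm A V), l ≠ [] ∧ (∀ s ∈ l, NoTau s) ∧
      Deriv AX (listSum ((u :: ut).map (pre none) ++ lo)) (listSum (l.map (pre none)))
  | [], ut, hu, hut, _ => by
      refine ⟨u :: ut, by simp, ?_, by rw [List.append_nil]; exact .refl _⟩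
      intro s hs
      rcases List.mem_cons.mp hs with h | hs
      · rw [h]; exact hu
      · exact hut s hs
  | o :: rest, ut, hu, hut, hlo => by
      have hno : NoTau o := hlo o List.mem_cons_self
      obtain ⟨l, hne, hN, hd⟩ := lemH u rest ((plus u o) :: ut) hu
        (fun s hs => by
          rcases List.mem_cons.mp hs with h | hs
          · rw [h]; exact ⟨hu, hno⟩
          · exact hut s hs)
        (fun s hs => hlo s (List.mem_cons_of_mem _ hs))
      refine ⟨l, hne, hN, ?_⟩
      refine .trans (.plus (.refl (pre none u)) (listSum_perm List.perm_middle)) ?_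
      refine .trans (.symm (.ax (.A2 (pre none u) o _))) ?_
      refine .trans (.plus (.ax (.WIF2 u o)) (.refl _)) ?_
      exact .trans (.ax (.A2 (pre none u) (pre none (plus u o)) _)) hd

private lemma lemF : ∀ t : Tm A V, ∃ lt lo : List (Tm A V),
    (∀ s ∈ lt, NoTau s) ∧ (∀ s ∈ lo, NoTau s) ∧
    ((∃ t', Step t none t') → lt ≠ []) ∧
    Deriv AX t (listSum (lt.map (pre none) ++ lo))
  | nil => by
      refine ⟨[], [], by simp, by simp, ?_, .refl _⟩
      rintro ⟨t', h⟩; cases h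
  | var x => by
      refine ⟨[], [var x], by simp, ?_, ?_, .symm (.ax (.A4 _))⟩
      swap
      · rintro ⟨t', h⟩; cases h
      intro s hs; rw [List.mem_singleton] at hs; subst hs; trivial
  | plus u v => by
      obtain ⟨lt1, lo1, h1t, h1o, h1s, h1d⟩ := lemF u
      obtain ⟨lt2, lo2, h2t, h2o, h2s, h2d⟩ := lemF v
      refine ⟨lt1 ++ lt2, lo1 ++ lo2, ?_, ?_, ?_, ?_⟩
      · intro s hs
        rcases List.mem_append.mp hs with hs | hs
        · exact h1t s hs
        · exact h2t s hs
      · intro s hs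
        rcases List.mem_append.mp hs with hs | hs
        · exact h1o s hs
        · exact h2o s hs
      · rintro ⟨t', hs⟩
        cases hs with
        | plusL _ h => simp [h1s ⟨_, h⟩]
        | plusR _ h => simp [h2s ⟨_, h⟩]
      · refine .trans (.plus h1d h2d) ?_
        refine .trans (listSum_append _ _) (listSum_perm ?_)
        rw [List.map_append, List.append_assoc, List.append_assoc]
        refine List.Perm.append_left _ ?_
        rw [← List.append_assoc, ← List.append_assoc]
        exact List.Perm.append_right _ (List.perm_append_comm)
  | pre none u => by
      obtain ⟨lt, lo, hT, hO, _, hd⟩ := lemF u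
      cases lt with
      | nil =>
          refine ⟨[listSum lo], [], ?_, by simp, fun _ => by simp,
            .trans (.pre none hd) (.symm (.ax (.A4 _)))⟩
          intro s hs; rw [List.mem_singleton] at hs; subst hs; exact noTau_listSum hO
      | cons x rest =>
          exact ⟨x :: rest, lo, hT, hO, fun _ => by simp,
            .trans (.pre none hd) (lawL2 x (listSum (rest.map (pre none) ++ lo)))⟩
  | pre (some a) u => by
      obtain ⟨lt, lo, hT, hO, _, hd⟩ := lemF u
      obtain ⟨l, hne, hN, hg⟩ := lemG (some a) lt lo hT hO
      refine ⟨[], l.map (pre (some a)), by simp, ?_, ?_, .trans (.pre (some a) hd) hg⟩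
      · intro s hs
        obtain ⟨x, hx, rfl⟩ := List.mem_map.mp hs
        exact hN x hx
      · rintro ⟨t', hs⟩
        cases hs

end Tm

/-- every BCCS term with a τ-transition can be proved equal, from
A1-4 + WIF1 + WIF2, to a nonempty sum `Σ_{i∈I} τ t_i` with all `t_i` BCCSP terms. -/
theorem stmt3 {A V : Type} (t : Tm A V) (h : ∃ t', Tm.Step t none t') :
    ∃ l : List (Tm A V), l ≠ [] ∧ (∀ s ∈ l, Tm.NoTau s) ∧
      Tm.Deriv Tm.AX t (Tm.listSum (l.map (fun s => Tm.pre none s))) := by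
  obtain ⟨lt, lo, hT, hO, hs, hd⟩ := Tm.lemF t
  obtain ⟨u, ut, rfl⟩ : ∃ u ut, lt = u :: ut := by
    cases lt with
    | nil => exact absurd rfl (hs h)
    | cons u ut => exact ⟨u, ut, rfl⟩
  obtain ⟨l, hne, hN, hH⟩ := Tm.lemH u lo ut (hT u List.mem_cons_self)
    (fun s hs => hT s (List.mem_cons_of_mem _ hs)) hO
  exact ⟨l, hne, hN, .trans hd hH⟩
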